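/- arXiv:1809.06898 — 2 statements merged into one kernel-verified Lean document; each statement's English description precedes it below -/
import Mathlib

section
/- The Margolis homology of B₂ is concentrated in length 0: for each r ∈ {0,1,2} and each λ > 0, if x ∈ B₂ is a linear combination of monomials of length exactly λ and Q_r x = 0, then x = Q_r y for some y ∈ B₂ that is a linear combination of monomials of length exactly λ + 1. -/
/-- A monomial of `B n = F_p[ζ₁, ζ₂, …] ⊗ Λ(τ̄_{n+1}, τ̄_{n+2}, …)`:
`e k` is the exponent of `ζ_k` (with `e 0 = 0`, i.e. no `ζ₀`), and
`t` is the set of indices `m` of the exterior generators `τ̄_m` occurring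
(all of which satisfy `m ≥ n + 1`). -/
structure Mono (n : ℕ) where
  e : ℕ →₀ ℕ
  t : Finset ℕ
  he : e 0 = 0
  ht : ∀ m ∈ t, n + 1 ≤ m

/-- `B p n` models `A//E(n)_* = F_p[ζ₁, ζ₂, …] ⊗ Λ(τ̄_{n+1}, …)` as the free
`F_p`-vector space on its monomial basis. -/
abbrev B (p n : ℕ) : Type := Mono n →₀ ZMod p

namespace Mono

variable {n : ℕ}

/-- Internal (topological) degree of a monomial: `deg ζ_k = 2(p^k − 1)`,
`deg τ̄_m = 2p^m − 1`. -/
def deg (p : ℕ) (x : Mono n) : ℕ :=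
  x.e.sum (fun k a => a * (2 * (p ^ k - 1))) + ∑ m ∈ x.t, (2 * p ^ m - 1)

/-- Weight of a monomial: `wt ζ_k = wt τ̄_k = p^k`, extended additively. -/
def wt (p : ℕ) (x : Mono n) : ℕ :=
  x.e.sum (fun k a => a * p ^ k) + ∑ m ∈ x.t, p ^ m

/-- Length of a monomial: the number of exterior factors `τ̄_m` occurring in it. -/
def len (x : Mono n) : ℕ := x.t.card

end Mono

/-- The monomial obtained from `x` by the Milnor operation `Q_r` acting on the
exterior factor `τ̄_m`: remove `τ̄_m` and multiply by `ζ_{m−r}^{p^r}`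
(with the convention `ζ₀ = 1`, i.e. if `m ≤ r` nothing is added). -/
noncomputable def Qtarget (p r : ℕ) {n : ℕ} (x : Mono n) (m : ℕ) : Mono n where
  e := if r < m then x.e + Finsupp.single (m - r) (p ^ r) else x.e
  t := x.t.erase m
  he := by
    by_cases h : r < m
    · simp [if_pos h, Finsupp.single_apply, x.he, Nat.sub_ne_zero_of_lt h]
    · simp [if_neg h, x.he]
  ht := fun m' hm' => x.ht m' (Finset.mem_of_mem_erase hm')

/-- Value of the Milnor operation `Q_r` on a basis monomial: the signed sum over the
exterior factors `τ̄_m` of `x`, the sign being the Koszul sign `(−1)^{#{m' ∈ t, m' < m}}`. -/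
noncomputable def Qmono (p r : ℕ) {n : ℕ} (x : Mono n) : B p n :=
  ∑ m ∈ x.t, ((-1 : ZMod p) ^ ((x.t.filter (fun m' => m' < m)).card)) •
    Finsupp.single (Qtarget p r x m) (1 : ZMod p)

/-- The Milnor operation `Q_r : B_n → B_n`, the unique graded derivation with
`Q_r ζ_k = 0` and `Q_r τ̄_m = ζ_{m−r}^{p^r}`. -/
noncomputable def Qop (p n r : ℕ) : B p n →ₗ[ZMod p] B p n :=
  Finsupp.lsum (ZMod p) fun x => LinearMap.toSpanSingleton (ZMod p) (B p n) (Qmono p r x)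

/-- The span of the set of monomials satisfying a predicate `P`. -/
noncomputable def monSpan (p n : ℕ) (P : Mono n → Prop) : Submodule (ZMod p) (B p n) :=
  Submodule.span (ZMod p) ((fun x => Finsupp.single x (1 : ZMod p)) '' {x | P x})

section Homotopy

variable (p r : ℕ)

/-- `good p r x m` says the monomial `x` is "non-reduced" at position `m`:
either `τ̄_m` occurs, or the exponent of `ζ_{m-r}` is at least `p^r`. -/
def good (x : Mono 2) (m : ℕ) : Prop :=
  3 ≤ m ∧ (m ∈ x.t ∨ p ^ r ≤ x.e (m - r))

instance (x : Mono 2) (m : ℕ) : Decidable (good p r x m) := by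
  unfold good; infer_instance

lemma good_of_mem {x : Mono 2} {m : ℕ} (hm : m ∈ x.t) : good p r x m :=
  ⟨x.ht m hm, Or.inl hm⟩

/-- The monomial obtained from `x` by removing `ζ_{m-r}^{p^r}` and inserting `τ̄_m`. -/
noncomputable def Htarget (x : Mono 2) (m : ℕ) : Mono 2 where
  e := x.e - Finsupp.single (m - r) (p ^ r)
  t := if 3 ≤ m then insert m x.t else x.t
  he := by rw [Finsupp.tsub_apply, x.he]; exact Nat.zero_sub _
  ht := by
    intro m' hm'
    split at hm'
    · rcases Finset.mem_insert.1 hm' with h | h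
      · omega
      · exact x.ht m' h
    · exact x.ht m' hm'

open Classical in
/-- The contracting homotopy on a basis monomial. -/
noncomputable def Hmono (x : Mono 2) : B p 2 :=
  if h : ∃ m, good p r x m then
    if Nat.find h ∈ x.t then 0 else Finsupp.single (Htarget p r x (Nat.find h)) 1
  else 0

/-- The contracting homotopy as a linear map. -/
noncomputable def Hop : B p 2 →ₗ[ZMod p] B p 2 :=
  Finsupp.lsum (ZMod p) fun x => LinearMap.toSpanSingleton (ZMod p) (B p 2) (Hmono p r x)

lemma Hop_single (z : Mono 2) : Hop p r (Finsupp.single z 1) = Hmono p r z := by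
  simp [Hop, Finsupp.lsum_single]

lemma Qop_single (z : Mono 2) : Qop p 2 r (Finsupp.single z 1) = Qmono p r z := by
  simp [Qop, Finsupp.lsum_single]

lemma Mono.ext2 {n : ℕ} {x y : Mono n} (h1 : x.e = y.e) (h2 : x.t = y.t) : x = y := by
  cases x; cases y; simp only at h1 h2; subst h1; subst h2; rfl

lemma Hmono_eq {x : Mono 2} {M : ℕ} (hM : good p r x M)
    (hmin : ∀ m, m < M → ¬ good p r x m) :
    Hmono p r x = if M ∈ x.t then 0 else Finsupp.single (Htarget p r x M) 1 := by
  have h : ∃ m, good p r x m := ⟨M, hM⟩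
  have hfind : Nat.find h = M := by
    rw [Nat.find_eq_iff]
    exact ⟨hM, fun m hm => hmin m hm⟩
  rw [Hmono, dif_pos h, hfind]

lemma Qtarget_e {x : Mono 2} {m : ℕ} (hr : r ≤ 2) (h3 : 3 ≤ m) :
    (Qtarget p r x m).e = x.e + Finsupp.single (m - r) (p ^ r) := by
  simp only [Qtarget]
  rw [if_pos (by omega)]

lemma Qtarget_t (x : Mono 2) (m : ℕ) : (Qtarget p r x m).t = x.t.erase m := rfl

lemma Htarget_e (x : Mono 2) (m : ℕ) :
    (Htarget p r x m).e = x.e - Finsupp.single (m - r) (p ^ r) := rfl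

lemma Htarget_t {x : Mono 2} {m : ℕ} (h3 : 3 ≤ m) :
    (Htarget p r x m).t = insert m x.t := by
  simp only [Htarget]
  rw [if_pos h3]


lemma sub_add_cancel_single (f : ℕ →₀ ℕ) (i q : ℕ) (h : q ≤ f i) :
    f - Finsupp.single i q + Finsupp.single i q = f := by
  ext k
  simp only [Finsupp.add_apply, Finsupp.tsub_apply, Finsupp.single_apply]
  rcases eq_or_ne i k with rfl | hk
  · rw [if_pos rfl]; omega
  · rw [if_neg hk]; omega

lemma add_single_sub_comm (f : ℕ →₀ ℕ) (i j q s : ℕ) (h : q ≤ f i) :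
    f + Finsupp.single j s - Finsupp.single i q
      = f - Finsupp.single i q + Finsupp.single j s := by
  ext k
  simp only [Finsupp.add_apply, Finsupp.tsub_apply, Finsupp.single_apply]
  rcases eq_or_ne i k with rfl | hk
  · rw [if_pos rfl]; split_ifs <;> omega
  · rw [if_neg hk]; split_ifs <;> omega

/-- The key homotopy identity on monomials of positive length. -/
lemma key (hr : r ≤ 2) (x : Mono 2) (hx : x.t.Nonempty) :
    Qop p 2 r (Hmono p r x) + Hop p r (Qmono p r x) = Finsupp.single x (1 : ZMod p) := by
  obtain ⟨m0, hm0⟩ := hx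
  have h : ∃ m, good p r x m := ⟨m0, good_of_mem p r hm0⟩
  obtain ⟨M, hM, hmin⟩ : ∃ M, good p r x M ∧ ∀ m, m < M → ¬ good p r x m :=
    ⟨Nat.find h, Nat.find_spec h, fun m hm => Nat.find_min h hm⟩
  have h3 : 3 ≤ M := hM.1
  have hlow : ∀ m ∈ x.t, M ≤ m := by
    intro m hm
    by_contra hcon
    exact hmin m (by omega) (good_of_mem p r hm)
  have hHx := Hmono_eq p r hM hmin
  have hHQ : Hop p r (Qmono p r x) = ∑ m ∈ x.t,
      ((-1 : ZMod p) ^ ((x.t.filter (fun m' => m' < m)).card)) • Hmono p r (Qtarget p r x m) := by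
    rw [Qmono, map_sum]
    refine Finset.sum_congr rfl fun m _ => ?_
    rw [map_smul, Hop_single]
  have below : ∀ m'', 3 ≤ m'' → m'' < M → (m'' ∉ x.t ∧ x.e (m'' - r) < p ^ r) := by
    intro m'' h3'' hlt
    have := hmin m'' hlt
    unfold good at this
    push_neg at this
    exact this h3''
  -- the "minimality transfers to Q-targets" fact
  have minQ : ∀ m ∈ x.t, ∀ m'', m'' < M → ¬ good p r (Qtarget p r x m) m'' := by
    intro m hm m'' hlt hgood''
    obtain ⟨h3'', hor⟩ := hgood''
    obtain ⟨hnt, hsmall⟩ := below m'' h3'' hlt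
    have hMm : M ≤ m := hlow m hm
    rcases hor with h' | h'
    · exact hnt (Finset.mem_of_mem_erase h')
    · rw [Qtarget_e p r hr (x.ht m hm), Finsupp.add_apply, Finsupp.single_apply,
        if_neg (by omega)] at h'
      omega
  by_cases hMt : M ∈ x.t
  · -- Case C : `H x = 0`, and `H (Q x) = x`.
    rw [hHx, if_pos hMt, map_zero, zero_add, hHQ]
    rw [Finset.sum_eq_single_of_mem M hMt ?other]
    case other =>
      intro m hm hne
      have hMm : M < m := lt_of_le_of_ne (hlow m hm) (Ne.symm hne)
      have hmem : M ∈ (Qtarget p r x m).t := by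
        rw [Qtarget_t]
        exact Finset.mem_erase.2 ⟨by omega, hMt⟩
      rw [Hmono_eq p r ⟨h3, Or.inl hmem⟩ (minQ m hm), if_pos hmem, smul_zero]
    have hfil : x.t.filter (fun m' => m' < M) = ∅ :=
      Finset.filter_eq_empty_iff.2 fun {a} ha => not_lt.2 (hlow a ha)
    have hnmem : M ∉ (Qtarget p r x M).t := by
      rw [Qtarget_t]; exact Finset.notMem_erase M x.t
    have hgoodM : good p r (Qtarget p r x M) M := by
      refine ⟨h3, Or.inr ?_⟩
      rw [Qtarget_e p r hr h3, Finsupp.add_apply, Finsupp.single_apply, if_pos rfl]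
      exact Nat.le_add_left _ _
    rw [Hmono_eq p r hgoodM (minQ M hMt), if_neg hnmem, hfil]
    have htgt : Htarget p r (Qtarget p r x M) M = x := by
      refine Mono.ext2 ?_ ?_
      · rw [Htarget_e, Qtarget_e p r hr h3]
        ext k
        simp only [Finsupp.tsub_apply, Finsupp.add_apply, Finsupp.single_apply]
        split <;> omega
      · rw [Htarget_t p r h3, Qtarget_t]
        exact Finset.insert_erase hMt
    rw [htgt]
    simp
  · -- Case B : `H x = single x' 1` with `x' = Htarget x M`.
    have hge : p ^ r ≤ x.e (M - r) := hM.2.resolve_left hMt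
    rw [hHx, if_neg hMt, Qop_single, hHQ, Qmono, Htarget_t p r h3,
      Finset.sum_insert hMt]
    have hfil : (insert M x.t).filter (fun m' => m' < M) = ∅ :=
      Finset.filter_eq_empty_iff.2 fun {a} ha => by
        rcases Finset.mem_insert.1 ha with rfl | ha'
        · omega
        · exact not_lt.2 (hlow a ha')
    have hQtM : Qtarget p r (Htarget p r x M) M = x := by
      refine Mono.ext2 ?_ ?_
      · rw [Qtarget_e p r hr h3, Htarget_e, sub_add_cancel_single _ _ _ hge]
      · rw [Qtarget_t, Htarget_t p r h3]
        exact Finset.erase_insert hMt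
    have hpair : ∀ m ∈ x.t,
        ((-1 : ZMod p) ^ (((insert M x.t).filter (fun m' => m' < m)).card)) •
          Finsupp.single (Qtarget p r (Htarget p r x M) m) (1 : ZMod p) +
        ((-1 : ZMod p) ^ ((x.t.filter (fun m' => m' < m)).card)) •
          Hmono p r (Qtarget p r x m) = 0 := by
      intro m hm
      have hMm : M < m := lt_of_le_of_ne (hlow m hm) (fun hc => hMt (hc ▸ hm))
      have h3m : 3 ≤ m := x.ht m hm
      -- the Hmono term
      have hnmem : M ∉ (Qtarget p r x m).t := by
        rw [Qtarget_t]
        exact fun hc => hMt (Finset.mem_of_mem_erase hc)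
      have hgood : good p r (Qtarget p r x m) M := by
        refine ⟨h3, Or.inr ?_⟩
        rw [Qtarget_e p r hr h3m, Finsupp.add_apply]
        exact le_add_right hge
      rw [Hmono_eq p r hgood (minQ m hm), if_neg hnmem]
      -- the two targets agree
      have htgt : Qtarget p r (Htarget p r x M) m = Htarget p r (Qtarget p r x m) M := by
        refine Mono.ext2 ?_ ?_
        · rw [Qtarget_e p r hr h3m, Htarget_e, Htarget_e, Qtarget_e p r hr h3m,
            add_single_sub_comm _ _ _ _ _ hge]
        · rw [Qtarget_t, Htarget_t p r h3, Htarget_t p r h3, Qtarget_t]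
          exact Finset.erase_insert_of_ne (by omega)
      -- the sign
      have hsg : (insert M x.t).filter (fun m' => m' < m) =
          insert M (x.t.filter (fun m' => m' < m)) := by
        rw [Finset.filter_insert, if_pos hMm]
      have hMnf : M ∉ x.t.filter (fun m' => m' < m) :=
        fun hc => hMt (Finset.mem_of_mem_filter M hc)
      rw [htgt, hsg, Finset.card_insert_of_notMem hMnf, pow_succ, mul_neg_one,
        neg_smul, neg_add_cancel]
    rw [hfil, hQtM]
    simp only [Finset.card_empty, pow_zero, one_smul]
    rw [add_assoc, ← Finset.sum_add_distrib, Finset.sum_congr rfl hpair]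
    simp

end Homotopy

/-- The Margolis homology of `B₂` is concentrated in length `0`:
for `r = 0,1,2` and `λ > 0`, every `Q_r`-cycle which is a linear combination of
monomials of length exactly `λ` is `Q_r y` for some `y` which is a linear combination
of monomials of length exactly `λ + 1`. -/
theorem margolis_concentrated_in_length_zero (p : ℕ) (hp : p.Prime) (hodd : Odd p)
    (r : ℕ) (hr : r ≤ 2) (lam : ℕ) (hlam : 0 < lam)
    (x : B p 2) (hx : x ∈ monSpan p 2 (fun y => y.len = lam))
    (hcycle : Qop p 2 r x = 0) :
    ∃ y ∈ monSpan p 2 (fun z => z.len = lam + 1), Qop p 2 r y = x := by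
  refine ⟨Hop p r x, ?_, ?_⟩
  · -- membership
    refine Submodule.span_induction ?_ ?_ ?_ ?_ hx
    · rintro _ ⟨z, hz, rfl⟩
      rw [Hop_single, Hmono]
      split
      · rename_i hex
        split
        · exact Submodule.zero_mem _
        · rename_i hnt
          refine Submodule.subset_span ⟨Htarget p r z (Nat.find hex), ?_, rfl⟩
          have h3 : 3 ≤ Nat.find hex := (Nat.find_spec hex).1
          simp only [Set.mem_setOf_eq] at hz ⊢
          rw [Mono.len, Htarget_t p r h3, Finset.card_insert_of_notMem hnt]
          simp only [Mono.len] at hz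
          omega
      · exact Submodule.zero_mem _
    · simpa using Submodule.zero_mem _
    · intro a b _ _ ha hb
      rw [map_add]; exact Submodule.add_mem _ ha hb
    · intro c a _ ha
      rw [map_smul]; exact Submodule.smul_mem _ c ha
  · -- Q (H x) = x
    have hid : Qop p 2 r (Hop p r x) + Hop p r (Qop p 2 r x) = x := by
      refine Submodule.span_induction ?_ ?_ ?_ ?_ hx
      · rintro _ ⟨z, hz, rfl⟩
        rw [Qop_single, Hop_single]
        refine key p r hr z ?_
        rw [← Finset.card_pos]
        simp only [Set.mem_setOf_eq] at hz
        rw [show z.t.card = z.len from rfl, hz]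
        exact hlam
      · simp
      · intro a b _ _ ha hb
        simp only [map_add]
        rw [add_add_add_comm, ha, hb]
      · intro c a _ ha
        simp only [map_smul, ← smul_add, ha]
    rw [hcycle, map_zero, add_zero] at hid
    exact hid
end

section
/- For i ≥ 1, let φ_i : B_i → B_{i−1} be the algebra map determined by φ_i(ζ_k) = ζ_{k−1} for all k ≥ 1 (with the convention ζ_0 = 1) and φ_i(τ̄_m) = τ̄_{m−1} for all m ≥ i+1. Then for every j ≥ 0, the restriction of φ_i to M_i(j) is an F_p-linear bijection from M_i(j) onto N_{i−1}(⌊j/p⌋); moreover, for every homogeneous element x ∈ M_i(j), deg(φ_i(x)) = deg(x) − 2(p−1)j, so M_i(j) ≅ Σ^{qj} N_{i−1}(⌊j/p⌋) as graded vector spaces, where q = 2(p−1). -/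
/-- `M_n(j) ⊆ B_n`: the span of the monomials of weight exactly `pj`. -/
noncomputable def Msub (p n j : ℕ) : Submodule (ZMod p) (B p n) := monSpan p n (fun x => x.wt p = p * j)

/-- `N_n(j) ⊆ B_n`: the `j`-th Brown–Gitler comodule, the span of the monomials of
weight at most `pj`. -/
noncomputable def Nsub (p n j : ℕ) : Submodule (ZMod p) (B p n) := monSpan p n (fun x => x.wt p ≤ p * j)

/-- The effect of `φ_i` on a monomial: `ζ_k ↦ ζ_{k−1}` (with `ζ₀ = 1`) and
`τ̄_m ↦ τ̄_{m−1}`. -/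
noncomputable def phiMono {i : ℕ} (hi : 1 ≤ i) (x : Mono i) : Mono (i - 1) where
  e := (Finsupp.comapDomain (fun k => k + 1) x.e (fun a _ b _ h => by simpa using h)).erase 0
  t := x.t.image (fun m => m - 1)
  he := by simp
  ht := by
    intro m hm
    rcases Finset.mem_image.mp hm with ⟨m', hm', rfl⟩
    have := x.ht m' hm'
    omega

/-- The (ungraded) algebra map `φ_i : B_i → B_{i−1}` with `φ_i(ζ_k) = ζ_{k−1}` and
`φ_i(τ̄_m) = τ̄_{m−1}`, as a linear map. -/
noncomputable def phiMap (p i : ℕ) (hi : 1 ≤ i) : B p i →ₗ[ZMod p] B p (i - 1) :=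
  Finsupp.lsum (ZMod p) fun x =>
    LinearMap.toSpanSingleton (ZMod p) (B p (i - 1)) (Finsupp.single (phiMono hi x) 1)


section Aux

open Finsupp

variable {p i : ℕ}

lemma Mono.ext' {n : ℕ} {x y : Mono n} (he : x.e = y.e) (ht : x.t = y.t) : x = y := by
  cases x; cases y; simp_all

lemma phiMono_e_apply (hi : 1 ≤ i) (x : Mono i) (k : ℕ) :
    (phiMono hi x).e k = if k = 0 then 0 else x.e (k + 1) := by
  rcases k with _ | k
  · simp [phiMono]
  · simp [phiMono]
    erw [Finsupp.comapDomain_apply]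

lemma phiMono_e_eq (hi : 1 ≤ i) (x : Mono i) :
    (phiMono hi x).e = Finsupp.comapDomain (fun k => k + 1) (x.e.erase 1)
      (fun a _ b _ h => by simpa using h) := by
  ext k
  rw [phiMono_e_apply]
  rcases k with _ | k
  · simp [x.he]
    erw [Finsupp.comapDomain_apply]
    simp [x.he]
  · rw [if_neg (by omega)]
    show x.e (k + 1 + 1) = x.e.erase 1 (k + 1 + 1)
    exact (Finsupp.erase_ne (by omega)).symm

lemma erase_bijOn (x : Mono i) :
    Set.BijOn (fun k => k + 1) ((fun k => k + 1) ⁻¹' ((x.e.erase 1).support : Set ℕ))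
      ((x.e.erase 1).support : Set ℕ) := by
  refine ⟨fun a ha => ha, fun a _ b _ h => by simpa using h, fun b hb => ?_⟩
  have hb' : (x.e.erase 1) b ≠ 0 := Finsupp.mem_support_iff.mp hb
  have hb0 : b ≠ 0 := by
    rintro rfl
    rw [Finsupp.erase_apply] at hb'
    simp [x.he] at hb'
  exact ⟨b - 1, by simpa [Nat.sub_add_cancel (Nat.one_le_iff_ne_zero.mpr hb0)] using hb,
    Nat.sub_add_cancel (Nat.one_le_iff_ne_zero.mpr hb0)⟩

lemma phi_e_sum {N : Type*} [AddCommMonoid N] (hi : 1 ≤ i) (x : Mono i) (F : ℕ → ℕ → N) :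
    (phiMono hi x).e.sum (fun k a => F (k + 1) a) = (x.e.erase 1).sum F := by
  rw [phiMono_e_eq hi x]
  exact Finsupp.sum_comapDomain (fun k => k + 1) (x.e.erase 1) F (erase_bijOn x)

lemma e_sum_split {N : Type*} [AddCommMonoid N] (x : Mono i) (H : ℕ → ℕ → N)
    (h0 : ∀ k, H k 0 = 0) (hadd : ∀ k a b, H k (a + b) = H k a + H k b) :
    x.e.sum H = H 1 (x.e 1) + (x.e.erase 1).sum H := by
  conv_lhs => rw [← Finsupp.single_add_erase 1 x.e]
  rw [Finsupp.sum_add_index' h0 hadd, Finsupp.sum_single_index (h0 1)]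

lemma phi_t_sum {N : Type*} [AddCommMonoid N] (hi : 1 ≤ i) (x : Mono i) (F : ℕ → N) :
    ∑ m ∈ (phiMono hi x).t, F m = ∑ m ∈ x.t, F (m - 1) := by
  show ∑ m ∈ x.t.image (fun m => m - 1), F m = _
  rw [Finset.sum_image]
  intro a ha b hb h
  have := x.ht a ha; have := x.ht b hb; beta_reduce at h; omega

lemma wt_phi (hp1 : 1 ≤ p) (hi : 1 ≤ i) (x : Mono i) :
    p * (phiMono hi x).wt p + x.e 1 * p = x.wt p := by
  unfold Mono.wt
  rw [Nat.mul_add, Finsupp.mul_sum, Finset.mul_sum]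
  have e1 : ((phiMono hi x).e.sum fun k a => p * (a * p ^ k)) =
      (x.e.erase 1).sum (fun k a => a * p ^ k) := by
    rw [← phi_e_sum hi x (fun k a => a * p ^ k)]
    exact Finsupp.sum_congr fun k _ => by ring
  have e2 : x.e.sum (fun k a => a * p ^ k) =
      x.e 1 * p ^ 1 + (x.e.erase 1).sum (fun k a => a * p ^ k) :=
    e_sum_split x _ (fun k => by ring) (fun k a b => by ring)
  have t1 : (∑ m ∈ (phiMono hi x).t, p * p ^ m) = ∑ m ∈ x.t, p ^ m := by
    have := phi_t_sum hi x (fun m => p ^ (m + 1))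
    rw [show (∑ m ∈ (phiMono hi x).t, p * p ^ m) = ∑ m ∈ (phiMono hi x).t, p ^ (m + 1) from
      Finset.sum_congr rfl fun m _ => by ring, this]
    refine Finset.sum_congr rfl fun m hm => ?_
    have := x.ht m hm
    congr 1
    omega
  rw [e1, t1, e2]
  ring

lemma zeta_identity (hp1 : 1 ≤ p) (k : ℕ) :
    2 * (p ^ (k + 1) - 1) = 2 * (p ^ k - 1) + 2 * (p - 1) * p ^ k := by
  have h1 : 1 ≤ p ^ k := Nat.one_le_pow _ _ hp1
  have h2 : 1 ≤ p ^ (k + 1) := Nat.one_le_pow _ _ hp1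
  zify [h1, h2, hp1]
  ring

lemma tau_identity (hp1 : 1 ≤ p) (m : ℕ) :
    2 * p ^ (m + 1) - 1 = (2 * p ^ m - 1) + 2 * (p - 1) * p ^ m := by
  have h1 : 1 ≤ p ^ m := Nat.one_le_pow _ _ hp1
  have h2 : 1 ≤ p ^ (m + 1) := Nat.one_le_pow _ _ hp1
  have h3 : 1 ≤ 2 * p ^ m := by omega
  have h4 : 1 ≤ 2 * p ^ (m + 1) := by omega
  zify [h3, h4, hp1]
  ring

lemma deg_phi (hp1 : 1 ≤ p) (hi : 1 ≤ i) (x : Mono i) :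
    x.deg p = (phiMono hi x).deg p + 2 * (p - 1) * ((phiMono hi x).wt p + x.e 1) := by
  unfold Mono.deg Mono.wt
  have key : ((phiMono hi x).e.sum fun k a => a * (2 * (p ^ k - 1)))
      + 2 * (p - 1) * ((phiMono hi x).e.sum fun k a => a * p ^ k)
      = (phiMono hi x).e.sum (fun k a => a * (2 * (p ^ (k + 1) - 1))) := by
    rw [Finsupp.mul_sum, ← Finsupp.sum_add]
    refine Finsupp.sum_congr fun k _ => ?_
    rw [zeta_identity hp1 k]
    ring
  have keyt : (∑ m ∈ (phiMono hi x).t, (2 * p ^ m - 1))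
      + 2 * (p - 1) * (∑ m ∈ (phiMono hi x).t, p ^ m)
      = ∑ m ∈ (phiMono hi x).t, (2 * p ^ (m + 1) - 1) := by
    rw [Finset.mul_sum, ← Finset.sum_add_distrib]
    exact Finset.sum_congr rfl fun m _ => (tau_identity hp1 m).symm
  have he' : (phiMono hi x).e.sum (fun k a => a * (2 * (p ^ (k + 1) - 1)))
      = (x.e.erase 1).sum (fun k a => a * (2 * (p ^ k - 1))) :=
    phi_e_sum hi x (fun k a => a * (2 * (p ^ k - 1)))
  have he2 : x.e.sum (fun k a => a * (2 * (p ^ k - 1))) =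
      x.e 1 * (2 * (p ^ 1 - 1)) + (x.e.erase 1).sum (fun k a => a * (2 * (p ^ k - 1))) :=
    e_sum_split x _ (fun k => by ring) (fun k a b => by ring)
  have ht' : (∑ m ∈ (phiMono hi x).t, (2 * p ^ (m + 1) - 1)) = ∑ m ∈ x.t, (2 * p ^ m - 1) := by
    rw [phi_t_sum hi x (fun m => 2 * p ^ (m + 1) - 1)]
    refine Finset.sum_congr rfl fun m hm => ?_
    have := x.ht m hm
    have hm1 : m - 1 + 1 = m := by omega
    rw [hm1]
  have expand : (phiMono hi x).deg p + 2 * (p - 1) * ((phiMono hi x).wt p + x.e 1)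
      = (((phiMono hi x).e.sum fun k a => a * (2 * (p ^ k - 1)))
          + 2 * (p - 1) * ((phiMono hi x).e.sum fun k a => a * p ^ k))
        + ((∑ m ∈ (phiMono hi x).t, (2 * p ^ m - 1))
          + 2 * (p - 1) * (∑ m ∈ (phiMono hi x).t, p ^ m))
        + 2 * (p - 1) * x.e 1 := by
    unfold Mono.deg Mono.wt
    ring
  show _ = (phiMono hi x).deg p + 2 * (p - 1) * ((phiMono hi x).wt p + x.e 1)
  rw [expand, key, keyt, he', ht', he2]
  have : p ^ 1 = p := pow_one p
  rw [this]
  ring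

lemma dvd_wt {n : ℕ} (y : Mono n) : p ∣ y.wt p := by
  unfold Mono.wt
  refine dvd_add (Finset.dvd_sum ?_) (Finset.dvd_sum ?_)
  · intro k hk
    have hk0 : k ≠ 0 := by
      rintro rfl
      exact (Finsupp.mem_support_iff.mp hk) y.he
    exact Dvd.dvd.mul_left (dvd_pow_self p hk0) _
  · intro m hm
    have := y.ht m hm
    exact dvd_pow_self p (by omega)

/-- The inverse of `phiMono` on monomials of weight `p*j`. -/
noncomputable def psiMono (p : ℕ) (hi : 1 ≤ i) (j : ℕ) (y : Mono (i - 1)) : Mono i where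
  e := Finsupp.mapDomain (fun k => k + 1) y.e + Finsupp.single 1 (j - y.wt p)
  t := y.t.image (fun m => m + 1)
  he := by
    have h0 : (0 : ℕ) ∉ Set.range (fun k : ℕ => k + 1) := by
      rintro ⟨a, ha⟩; simp at ha
    simp [Finsupp.mapDomain_notin_range _ _ h0]
  ht := by
    intro m hm
    rcases Finset.mem_image.mp hm with ⟨m', hm', rfl⟩
    have := y.ht m' hm'
    omega

lemma phiMono_psiMono (hi : 1 ≤ i) (j : ℕ) (y : Mono (i - 1)) :
    phiMono hi (psiMono p hi j y) = y := by
  have hinj : Function.Injective (fun k : ℕ => k + 1) := fun a b h => by simpa using h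
  refine Mono.ext' ?_ ?_
  · ext k
    rw [phiMono_e_apply]
    rcases k with _ | k
    · simp [y.he]
    · have hmd : Finsupp.mapDomain (fun k => k + 1) y.e (k + 1 + 1) = y.e (k + 1) :=
        Finsupp.mapDomain_apply hinj y.e (k + 1)
      show ((Finsupp.mapDomain (fun k => k + 1) y.e + Finsupp.single 1 (j - y.wt p) :
        ℕ →₀ ℕ)) (k + 1 + 1) = y.e (k + 1)
      rw [Finsupp.add_apply, hmd, Finsupp.single_apply]
      simp
  · show ((psiMono p hi j y).t).image (fun m => m - 1) = y.t
    show (y.t.image (fun m => m + 1)).image (fun m => m - 1) = y.t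
    rw [Finset.image_image]
    simp [Function.comp_def]

lemma wt_psi (hi : 1 ≤ i) {j : ℕ} {y : Mono (i - 1)} (hy : y.wt p ≤ j) :
    (psiMono p hi j y).wt p = p * j := by
  obtain ⟨d, rfl⟩ : ∃ d, j = y.wt p + d := ⟨j - y.wt p, by omega⟩
  show (Finsupp.mapDomain (fun k => k + 1) y.e
      + Finsupp.single 1 (y.wt p + d - y.wt p)).sum (fun k a => a * p ^ k)
      + ∑ m ∈ (y.t.image fun m => m + 1), p ^ m = p * (y.wt p + d)
  rw [Nat.add_sub_cancel_left]
  rw [Finsupp.sum_add_index' (fun k => by ring) (fun k a b => by ring),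
    Finsupp.sum_mapDomain_index (fun k => by ring) (fun k a b => by ring),
    Finsupp.sum_single_index (by ring), Finset.sum_image (fun a _ b _ h => by omega)]
  have h1 : (y.e.sum fun k a => a * p ^ (k + 1)) = p * y.e.sum fun k a => a * p ^ k := by
    rw [Finsupp.mul_sum]; exact Finsupp.sum_congr fun k _ => by ring
  have h2 : (∑ m ∈ y.t, p ^ (m + 1)) = p * ∑ m ∈ y.t, p ^ m := by
    rw [Finset.mul_sum]; exact Finset.sum_congr rfl fun m _ => by ring
  rw [h1, h2, pow_one]
  have hw : y.wt p = (y.e.sum fun k a => a * p ^ k) + ∑ m ∈ y.t, p ^ m := rfl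
  rw [hw]
  ring

end Aux

/-- For `i ≥ 1`, the map `φ_i : B_i → B_{i−1}` restricts to an
`F_p`-linear bijection of `M_i(j)` onto `N_{i−1}(⌊j/p⌋)`, and on a monomial of `M_i(j)`
it lowers the internal degree by exactly `qj` where `q = 2(p−1)`; hence
`M_i(j) ≅ Σ^{qj} N_{i−1}(⌊j/p⌋)` as graded vector spaces. -/
theorem M_i_j_iso_suspension_of_BrownGitler (p : ℕ) (hp : p.Prime) (hodd : Odd p)
    (i : ℕ) (hi : 1 ≤ i) (j : ℕ) :
    Submodule.map (phiMap p i hi) (Msub p i j) = Nsub p (i - 1) (j / p) ∧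
    (∀ v ∈ Msub p i j, phiMap p i hi v = 0 → v = 0) ∧
    (∀ x : Mono i, x.wt p = p * j →
      x.deg p = (phiMono hi x).deg p + 2 * (p - 1) * j) := by
  haveI : Fact p.Prime := ⟨hp⟩
  have hp0 : 0 < p := hp.pos
  have hp1 : 1 ≤ p := hp0
  have hsingle : ∀ x : Mono i, phiMap p i hi (Finsupp.single x (1 : ZMod p))
      = Finsupp.single (phiMono hi x) 1 := by
    intro x
    simp [phiMap, Finsupp.sum_single_index, LinearMap.toSpanSingleton_apply]
  have hwtphi : ∀ x : Mono i, x.wt p = p * j → (phiMono hi x).wt p ≤ p * (j / p) := by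
    intro x hx
    obtain ⟨c, hc⟩ := dvd_wt (p := p) (phiMono hi x)
    have h1 := wt_phi hp1 hi x
    rw [hx] at h1
    have h2 : (phiMono hi x).wt p ≤ j := by
      have h3 : p * (phiMono hi x).wt p ≤ p * j := by omega
      exact Nat.le_of_mul_le_mul_left h3 hp0
    have hcj : c ≤ j / p := by
      rw [Nat.le_div_iff_mul_le hp0]
      calc c * p = p * c := Nat.mul_comm _ _
        _ ≤ j := hc ▸ h2
    calc (phiMono hi x).wt p = p * c := hc
      _ ≤ p * (j / p) := Nat.mul_le_mul_left p hcj
  have himage : phiMono hi '' {x : Mono i | x.wt p = p * j}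
      = {y : Mono (i - 1) | y.wt p ≤ p * (j / p)} := by
    ext y
    constructor
    · rintro ⟨x, hx, rfl⟩
      exact hwtphi x hx
    · intro hy
      have hyj : y.wt p ≤ j := le_trans hy (by rw [mul_comm]; exact Nat.div_mul_le_self j p)
      exact ⟨psiMono p hi j y, wt_psi hi hyj, phiMono_psiMono hi j y⟩
  have hlin : phiMap p i hi = Finsupp.lmapDomain (ZMod p) (ZMod p) (phiMono hi) := by
    apply Finsupp.lhom_ext
    intro a b
    rw [Finsupp.lmapDomain_apply, Finsupp.mapDomain_single]
    simp [phiMap, LinearMap.toSpanSingleton_apply, Finsupp.smul_single]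
  refine ⟨?_, ?_, ?_⟩
  · rw [Msub, Nsub, monSpan, monSpan, Submodule.map_span]
    congr 1
    rw [← himage, ← Set.image_comp, ← Set.image_comp]
    exact Set.image_congr fun x _ => hsingle x
  · have hinj : Set.InjOn (phiMono hi) {x : Mono i | x.wt p = p * j} := by
      intro x hx x' hx' hphi
      have hx : x.wt p = p * j := hx
      have hx' : x'.wt p = p * j := hx'
      have key : ∀ a b : Mono i, (phiMono hi a).t = (phiMono hi b).t →
          ∀ m ∈ a.t, m ∈ b.t := by
        intro a b hab m hm
        have h1 : m - 1 ∈ (phiMono hi b).t := by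
          rw [← hab]
          exact Finset.mem_image_of_mem _ hm
        rcases Finset.mem_image.mp h1 with ⟨m', hm', hmm⟩
        have h2 := b.ht m' hm'
        have h3 := a.ht m hm
        have h4 : m' = m := by omega
        rwa [← h4]
      have htt : (phiMono hi x).t = (phiMono hi x').t := by rw [hphi]
      refine Mono.ext' ?_ ?_
      · ext k
        rcases k with _ | k
        · rw [x.he, x'.he]
        rcases k with _ | k
        · have h1 := wt_phi hp1 hi x
          have h1' := wt_phi hp1 hi x'
          rw [hphi] at h1
          rw [hx] at h1
          rw [hx'] at h1'
          have h2 : x.e 1 * p = x'.e 1 * p := by omega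
          exact Nat.eq_of_mul_eq_mul_right hp0 h2
        · have e1 := phiMono_e_apply hi x (k + 1)
          have e2 := phiMono_e_apply hi x' (k + 1)
          rw [hphi] at e1
          have := e1.symm.trans e2
          simpa using this
      · exact Finset.ext fun m =>
          ⟨fun hm => key x x' htt m hm, fun hm => key x' x htt.symm m hm⟩
    have hsupp : Msub p i j ≤ Finsupp.supported (ZMod p) (ZMod p)
        {x : Mono i | x.wt p = p * j} := by
      rw [Msub, monSpan, Submodule.span_le]
      rintro v ⟨x, hx, rfl⟩
      exact Finsupp.single_mem_supported _ _ hx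
    intro v hv hv0
    have hvs : (v.support : Set (Mono i)) ⊆ {x : Mono i | x.wt p = p * j} :=
      Finsupp.mem_supported _ v |>.mp (hsupp hv)
    have h0 : Finsupp.mapDomain (phiMono hi) v = Finsupp.mapDomain (phiMono hi) 0 := by
      rw [Finsupp.mapDomain_zero, ← Finsupp.lmapDomain_apply (ZMod p) (ZMod p), ← hlin]
      exact hv0
    exact Finsupp.mapDomain_injOn _ hinj hvs (by simp) h0
  · intro x hx
    have h1 := wt_phi hp1 hi x
    rw [hx] at h1
    have hj : (phiMono hi x).wt p + x.e 1 = j := by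
      have h2 : p * ((phiMono hi x).wt p + x.e 1) = p * j := by
        rw [Nat.mul_add, Nat.mul_comm p (x.e 1)]
        exact h1
      exact Nat.eq_of_mul_eq_mul_left hp0 h2
    rw [deg_phi hp1 hi x, hj]
end
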